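/- Let C and K be integers with 1 ≤ K ≤ C−2, and let η ∈ ℝ^C be a conditional probability vector with η_1 > η_2 > ⋯ > η_C and Σ_{y=K+2}^{C} η_y > K/(K+1). Let R_K^{hinge} be the conditional surrogate AUTKC risk for the hinge loss ℓ_{hinge}(t) := max{0, 1−t}. Let s* ∈ ℝ^C satisfy s*_1 > s*_2 > ⋯ > s*_{K+1} and s*_{K+1} ≥ s*_j for all j ≥ K+2 (so s* is top-K ranking-preserving with respect to η), and define s ∈ ℝ^C by s_i := s*_{K+1} for 1 ≤ i ≤ K+1 and s_i := s*_i for i ≥ K+2. Then s is not top-K ranking-preserving with respect to η, yet R_K^{hinge}(s, η) < R_K^{hinge}(s*, η). Hence the hinge loss is not AUTKC consistent under this condition on η. -/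

import Mathlib

/-- The `k`-th largest entry (1-indexed, counted with multiplicity) of `s ∈ ℝ^C`. -/
noncomputable def kthLargest {C : ℕ} (s : Fin C → ℝ) (k : ℕ) : ℝ :=
  ((List.ofFn s).insertionSort (· ≤ ·)).getD (C - k) 0

open Classical in
/-- The rank of label `y` under the score vector `s`, with worst-case tie-breaking
relative to `η`: `π_s(y) = 1 + |{j : s_j > s_y}| + |{j : s_j = s_y ∧ η_j < η_y}|`. -/
noncomputable def rankW {C : ℕ} (η s : Fin C → ℝ) (y : Fin C) : ℕ :=
  1 + (Finset.univ.filter fun j => s y < s j).card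
    + (Finset.univ.filter fun j => s j = s y ∧ η j < η y).card

/-- `s` is top-`K` ranking-preserving w.r.t. `η`: for every label `y` and every
`k ∈ {1,…,K}`, `π_s(y) = k` implies that `η_y` is the `k`-th largest entry of `η`. -/
def RPK {C : ℕ} (K : ℕ) (η s : Fin C → ℝ) : Prop :=
  ∀ y : Fin C, ∀ k : ℕ, 1 ≤ k → k ≤ K → rankW η s y = k → η y = kthLargest η k

/-- The conditional surrogate AUTKC risk
`R_K^ℓ(s, η) = Σ_y η_y · (1/K) Σ_{k=1}^{K+1} ℓ(s_y − s_[k])`. -/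
noncomputable def surrRisk {C : ℕ} (K : ℕ) (ℓ : ℝ → ℝ) (η s : Fin C → ℝ) : ℝ :=
  ∑ y : Fin C, η y * ((1 / (K : ℝ)) *
    ∑ k ∈ Finset.Icc 1 (K + 1), ℓ (s y - kthLargest s k))

/-- The hinge loss `ℓ_hinge(t) = [1 − t]_+`. -/
noncomputable def hingeLoss (t : ℝ) : ℝ := max 0 (1 - t)

lemma sorted_getD_eq {L : List ℝ} (hs : L.SortedLE) {C k : ℕ}
    (hL : L.length = C) (hk1 : 1 ≤ k) (hkC : k ≤ C) {x : ℝ}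
    (hgt : L.countP (fun a => decide (x < a)) ≤ k - 1)
    (hge : k ≤ L.countP (fun a => decide (x ≤ a))) :
    L.getD (C - k) 0 = x := by
  have hi : C - k < L.length := by omega
  rw [List.getD_eq_getElem L 0 hi]
  set i := C - k with hidef
  have hmono : ∀ (j1 j2 : ℕ) (h1 : j1 < L.length) (h2 : j2 < L.length), j1 ≤ j2 → L[j1] ≤ L[j2] := by
    intro j1 j2 h1 h2 hle
    exact hs (a := ⟨j1, h1⟩) (b := ⟨j2, h2⟩) hle
  have hle : L[i] ≤ x := by
    by_contra hlt
    push_neg at hlt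
    have hdrop : (L.drop i).countP (fun a => decide (x < a)) = (L.drop i).length := by
      rw [List.countP_eq_length]
      intro a ha
      obtain ⟨j, hj, rfl⟩ := List.mem_iff_getElem.mp ha
      rw [List.length_drop] at hj
      rw [List.getElem_drop]
      simp only [decide_eq_true_eq]
      exact lt_of_lt_of_le hlt (hmono i (i + j) hi (by omega) (by omega))
    have : (L.take i ++ L.drop i).countP (fun a => decide (x < a)) = (L.take i).countP (fun a => decide (x < a)) + (L.drop i).countP (fun a => decide (x < a)) := List.countP_append
    rw [List.take_append_drop] at this
    rw [List.length_drop] at hdrop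
    omega
  have hge2 : x ≤ L[i] := by
    by_contra hlt
    push_neg at hlt
    have hlt' : i + 1 ≤ L.length := by omega
    have htake : (L.take (i+1)).countP (fun a => decide (x ≤ a)) = 0 := by
      rw [List.countP_eq_zero]
      intro a ha
      obtain ⟨j, hj, rfl⟩ := List.mem_iff_getElem.mp ha
      rw [List.length_take] at hj
      rw [List.getElem_take]
      simp only [decide_eq_true_eq, not_le]
      calc L[j] ≤ L[i] := hmono j i (by omega) hi (by omega)
        _ < x := hlt
    have : (L.take (i+1) ++ L.drop (i+1)).countP (fun a => decide (x ≤ a)) = (L.take (i+1)).countP (fun a => decide (x ≤ a)) + (L.drop (i+1)).countP (fun a => decide (x ≤ a)) := List.countP_append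
    rw [List.take_append_drop] at this
    have h3 := List.countP_le_length (l := L.drop (i+1)) (p := fun a => decide (x ≤ a))
    rw [List.length_drop] at h3
    omega
  linarith

lemma countP_ofFn' {C : ℕ} (s : Fin C → ℝ) (p : ℝ → Prop) [DecidablePred p] :
    (List.ofFn s).countP (fun a => decide (p a)) = (Finset.univ.filter (fun i => p (s i))).card := by
  induction C with
  | zero => simp
  | succ n ih =>
    rw [List.ofFn_succ, List.countP_cons, ih (fun i => s i.succ)]
    rw [Finset.card_filter, Finset.card_filter, Fin.sum_univ_succ]
    simp [add_comm]

lemma kth_eq {C : ℕ} (s : Fin C → ℝ) {k : ℕ} (hk1 : 1 ≤ k) (hkC : k ≤ C) {x : ℝ}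
    (hgt : (Finset.univ.filter (fun i => x < s i)).card ≤ k - 1)
    (hge : k ≤ (Finset.univ.filter (fun i => x ≤ s i)).card) :
    kthLargest s k = x := by
  unfold kthLargest
  have hperm := List.perm_insertionSort (α := ℝ) (· ≤ ·) (List.ofFn s)
  apply sorted_getD_eq (List.sortedLE_insertionSort (l := List.ofFn s))
    (by rw [hperm.length_eq, List.length_ofFn])
    hk1 hkC
  · rw [hperm.countP_eq, countP_ofFn' s (fun a => x < a)]; exact hgt
  · rw [hperm.countP_eq, countP_ofFn' s (fun a => x ≤ a)]; exact hge

lemma card_filter_lt_val {C n : ℕ} (hn : n < C) :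
    (Finset.univ.filter (fun i : Fin C => (i : ℕ) < n)).card = n := by
  have : (Finset.univ.filter (fun i : Fin C => (i : ℕ) < n)) = Finset.Iio (⟨n, hn⟩ : Fin C) := by
    ext i; simp [Finset.mem_Iio, Fin.lt_def]
  rw [this, Fin.card_Iio]

/-- Inconsistency of the hinge loss (Theorem 6 of the paper): if
`Σ_{y=K+2}^{C} η_y > K/(K+1)` for the strictly decreasing conditional probability
vector `η`, then for any top-`K` ranking-preserving score `s*` (strictly decreasing
on its first `K+1` coordinates, the remaining coordinates no larger than `s*_{K+1}`),
the score `s` obtained by collapsing the first `K+1` coordinates of `s*` to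
`s*_{K+1}` is not top-`K` ranking-preserving, yet achieves a strictly smaller
hinge surrogate risk. Hence the hinge loss is not AUTKC consistent. -/
theorem hinge_loss_inconsistent
    (C K : ℕ) (hK1 : 1 ≤ K) (hKC : K + 2 ≤ C)
    (η : Fin C → ℝ) (hnn : ∀ y, 0 ≤ η y) (hsum : ∑ y : Fin C, η y = 1)
    (hmono : StrictAnti η)
    (htail : (K : ℝ) / ((K : ℝ) + 1)
      < ∑ y ∈ Finset.univ.filter (fun y : Fin C => K + 1 ≤ (y : ℕ)), η y)
    (sstar : Fin C → ℝ)
    (h1 : ∀ i j : Fin C, i < j → (j : ℕ) ≤ K → sstar j < sstar i)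
    (h2 : ∀ j : Fin C, K + 1 ≤ (j : ℕ) → sstar j ≤ sstar ⟨K, by omega⟩)
    (s : Fin C → ℝ)
    (hs : ∀ i : Fin C, s i = if (i : ℕ) ≤ K then sstar ⟨K, by omega⟩ else sstar i) :
    ¬ RPK K η s ∧ surrRisk K hingeLoss η s < surrRisk K hingeLoss η sstar := by
  classical
  set m := sstar ⟨K, by omega⟩ with hm
  have hle_m : ∀ i : Fin C, s i ≤ m := by
    intro i
    rw [hs]
    split
    · exact le_refl m
    · next h => exact h2 i (by omega)
  have hsK : s ⟨K, by omega⟩ = m := by rw [hs]; simp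
  have facts :
      (∀ k, 1 ≤ k → k ≤ K + 1 → kthLargest s k = m)
      ∧ (∀ k (hk1' : 1 ≤ k) (hk2 : k ≤ K + 1), kthLargest sstar k = sstar ⟨k - 1, by omega⟩)
      ∧ kthLargest η 1 = η ⟨0, by omega⟩ := by
    refine ⟨?_, ?_, ?_⟩
    · intro k hk1' hk2
      apply kth_eq s hk1' (by omega)
      · have he : (Finset.univ.filter (fun i : Fin C => m < s i)) = ∅ :=
          Finset.filter_eq_empty_iff.mpr (fun i _ => not_lt.mpr (hle_m i))
        rw [he]; simp
      · have hsub : (Finset.univ.filter (fun i : Fin C => (i:ℕ) < K+1))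
            ⊆ (Finset.univ.filter (fun i : Fin C => m ≤ s i)) := by
          intro i hi
          rw [Finset.mem_filter] at hi ⊢
          refine ⟨hi.1, ?_⟩
          rw [hs, if_pos (by omega)]
        have := Finset.card_le_card hsub
        rw [card_filter_lt_val (by omega)] at this
        omega
    · intro k hk1' hk2
      have hkm : k - 1 < C := by omega
      apply kth_eq sstar hk1' (by omega)
      · have hsub : (Finset.univ.filter (fun i : Fin C => sstar ⟨k-1, by omega⟩ < sstar i))
            ⊆ (Finset.univ.filter (fun i : Fin C => (i:ℕ) < k-1)) := by
          intro i hi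
          rw [Finset.mem_filter] at hi ⊢
          refine ⟨hi.1, ?_⟩
          by_contra hge
          push_neg at hge
          have hxi : sstar i ≤ sstar ⟨k-1, by omega⟩ := by
            rcases Nat.lt_or_ge (i:ℕ) (K+1) with hiK | hiK
            · rcases Nat.eq_or_lt_of_le hge with he | hlt
              · have : i = (⟨k-1, by omega⟩ : Fin C) := Fin.ext he.symm
                rw [this]
              · exact le_of_lt (h1 ⟨k-1, by omega⟩ i (by rw [Fin.lt_def]; exact hlt) (by omega))
            · have hi2 := h2 i hiK
              have hmx : m ≤ sstar ⟨k-1, by omega⟩ := by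
                rcases Nat.lt_or_ge (k-1) K with h | h
                · exact le_of_lt (h1 ⟨k-1, by omega⟩ ⟨K, by omega⟩
                    (by rw [Fin.lt_def]; exact h) (by simp))
                · have hkK : k - 1 = K := by omega
                  have he2 : (⟨k-1, by omega⟩ : Fin C) = ⟨K, by omega⟩ := by simp [hkK]
                  rw [he2]
              linarith
          exact absurd hi.2 (not_lt.mpr hxi)
        have := Finset.card_le_card hsub
        rwa [card_filter_lt_val (by omega : k-1 < C)] at this
      · have hsub : (Finset.univ.filter (fun i : Fin C => (i:ℕ) < k))
            ⊆ (Finset.univ.filter (fun i : Fin C => sstar ⟨k-1, by omega⟩ ≤ sstar i)) := by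
          intro i hi
          rw [Finset.mem_filter] at hi ⊢
          refine ⟨hi.1, ?_⟩
          rcases Nat.lt_or_ge (i:ℕ) (k-1) with hlt | hge
          · exact le_of_lt (h1 i ⟨k-1, by omega⟩ (by simp [Fin.lt_def]; omega) (by simp; omega))
          · have : i = (⟨k-1, by omega⟩ : Fin C) := Fin.ext (by simp; omega)
            rw [this]
        have := Finset.card_le_card hsub
        rwa [card_filter_lt_val (by omega : k < C)] at this
    · apply kth_eq η le_rfl (by omega)
      · have he : (Finset.univ.filter (fun i : Fin C => η ⟨0, by omega⟩ < η i)) = ∅ :=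
          Finset.filter_eq_empty_iff.mpr (fun i _ =>
            not_lt.mpr (hmono.antitone (Fin.le_def.mpr (Nat.zero_le _))))
        rw [he]; simp
      · have hmem : (⟨0, by omega⟩ : Fin C)
            ∈ Finset.univ.filter (fun i : Fin C => η ⟨0, by omega⟩ ≤ η i) := by simp
        exact Finset.card_pos.mpr ⟨_, hmem⟩
  obtain ⟨F1, F2, hk1'⟩ := facts
  have F1 : ∀ k, 1 ≤ k → k ≤ K + 1 → kthLargest s k = m := F1
  constructor
  · -- not ranking preserving
    intro hRPK
    set A := Finset.univ.filter (fun j : Fin C => s j = m) with hA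
    have hAne : A.Nonempty := ⟨⟨K, by omega⟩, by simp [hA, hsK]⟩
    set y := A.max' hAne with hy
    have hyA : y ∈ A := A.max'_mem hAne
    have hsy : s y = m := (Finset.mem_filter.mp hyA).2
    have hrank : rankW η s y = 1 := by
      unfold rankW
      have e1 : (Finset.univ.filter fun j => s y < s j) = ∅ := by
        apply Finset.filter_eq_empty_iff.mpr
        intro j _
        rw [hsy]
        exact not_lt.mpr (hle_m j)
      have e2 : (Finset.univ.filter fun j => s j = s y ∧ η j < η y) = ∅ := by
        apply Finset.filter_eq_empty_iff.mpr
        intro j _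
        rintro ⟨hj1, hj2⟩
        have hjA : j ∈ A := by simp [hA]; rw [hj1, hsy]
        have : j ≤ y := A.le_max' j hjA
        have : y < j := (hmono.lt_iff_gt).mp hj2
        omega
      rw [e1, e2]
      simp
    have hky : η y = kthLargest η 1 := hRPK y 1 le_rfl hK1 hrank
    have hKy : (⟨K, by omega⟩ : Fin C) ≤ y := A.le_max' _ (by simp [hA, hsK])
    have h0y : (⟨0, by omega⟩ : Fin C) < y := by
      rw [Fin.lt_def]
      rw [Fin.le_def] at hKy
      simp at hKy ⊢
      omega
    have := hmono h0y
    rw [hky, hk1'] at this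
    exact lt_irrefl _ this
  · -- strict risk inequality
    have hKr : (1:ℝ) ≤ (K:ℝ) := by exact_mod_cast hK1
    have hKpos : (0:ℝ) < (K:ℝ) := by linarith
    have hKinv : (0:ℝ) ≤ 1 / (K:ℝ) := by positivity
    set Δ := ∑ k ∈ Finset.Icc 1 (K+1), (kthLargest sstar k - m) with hΔ
    -- each term of Δ is nonneg
    have hterm : ∀ k ∈ Finset.Icc 1 (K+1), m ≤ kthLargest sstar k := by
      intro k hk
      rw [Finset.mem_Icc] at hk
      rw [F2 k hk.1 hk.2]
      rcases Nat.lt_or_ge (k-1) K with h | h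
      · exact le_of_lt (h1 ⟨k-1, by omega⟩ ⟨K, by omega⟩ (by rw [Fin.lt_def]; exact h) (by simp))
      · have : k - 1 = K := by omega
        have : (⟨k-1, by omega⟩ : Fin C) = ⟨K, by omega⟩ := by simp [this]
        rw [this]
    have hterm' : ∀ k ∈ Finset.Icc 1 (K+1), (0:ℝ) ≤ kthLargest sstar k - m := by
      intro k hk; have := hterm k hk; linarith
    have hΔpos : 0 < Δ := by
      have h1m : sstar ⟨0, by omega⟩ - m ≤ Δ := by
        have := Finset.single_le_sum (f := fun k => kthLargest sstar k - m) hterm'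
          (by simp : 1 ∈ Finset.Icc 1 (K+1))
        rwa [F2 1 le_rfl (by omega)] at this
      have : m < sstar ⟨0, by omega⟩ :=
        h1 ⟨0, by omega⟩ ⟨K, by omega⟩ (by rw [Fin.lt_def]; simpa using (by omega : 0 < K)) (by simp)
      linarith
    have hle_Δ : ∀ y : Fin C, (y:ℕ) ≤ K → sstar y - m ≤ Δ := by
      intro y hy
      have hmem : (y:ℕ) + 1 ∈ Finset.Icc 1 (K+1) := by simp; omega
      have := Finset.single_le_sum (f := fun k => kthLargest sstar k - m) hterm' hmem
      rw [F2 ((y:ℕ)+1) (by omega) (by omega)] at this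
      have he : (⟨(y:ℕ)+1-1, by omega⟩ : Fin C) = y := by
        apply Fin.ext; simp
      rwa [he] at this
    -- exact value of risk of s
    have inner_s : ∀ y : Fin C,
        ∑ k ∈ Finset.Icc 1 (K+1), hingeLoss (s y - kthLargest s k)
          = ((K:ℝ)+1) * (1 + m - s y) := by
      intro y
      have e : ∀ k ∈ Finset.Icc 1 (K+1), hingeLoss (s y - kthLargest s k) = 1 + m - s y := by
        intro k hk
        rw [Finset.mem_Icc] at hk
        rw [F1 k hk.1 hk.2]
        unfold hingeLoss
        rw [max_eq_right (by have := hle_m y; linarith)]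
        ring
      rw [Finset.sum_congr rfl e, Finset.sum_const, Nat.card_Icc]
      simp only [Nat.add_sub_cancel, nsmul_eq_mul]
      push_cast
      ring
    -- lower bound identity for sstar inner sums
    have inner_star : ∀ y : Fin C,
        ∑ k ∈ Finset.Icc 1 (K+1), (1 - sstar y + kthLargest sstar k)
          = ((K:ℝ)+1) * (1 + m - sstar y) + Δ := by
      intro y
      have e : ∀ k ∈ Finset.Icc 1 (K+1), (1 - sstar y + kthLargest sstar k)
          = (1 + m - sstar y) + (kthLargest sstar k - m) := by
        intro k _; ring
      rw [Finset.sum_congr rfl e, Finset.sum_add_distrib, Finset.sum_const, Nat.card_Icc, ← hΔ]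
      simp only [Nat.add_sub_cancel, nsmul_eq_mul]
      push_cast
      ring
    have hlb : ∑ y : Fin C, η y * ((1 / (K:ℝ)) * (((K:ℝ)+1) * (1 + m - sstar y) + Δ))
        ≤ surrRisk K hingeLoss η sstar := by
      unfold surrRisk
      apply Finset.sum_le_sum
      intro y _
      apply mul_le_mul_of_nonneg_left _ (hnn y)
      rw [← inner_star y]
      apply mul_le_mul_of_nonneg_left _ hKinv
      apply Finset.sum_le_sum
      intro k _
      unfold hingeLoss
      have := le_max_right (0:ℝ) (1 - (sstar y - kthLargest sstar k))
      linarith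
    have hrs : surrRisk K hingeLoss η s
        = ∑ y : Fin C, η y * ((1 / (K:ℝ)) * (((K:ℝ)+1) * (1 + m - s y))) := by
      unfold surrRisk
      apply Finset.sum_congr rfl
      intro y _
      rw [inner_s y]
    -- the key strict inequality
    have key : ∑ y : Fin C, η y * ((1 / (K:ℝ)) * (((K:ℝ)+1) * (1 + m - s y)))
        < ∑ y : Fin C, η y * ((1 / (K:ℝ)) * (((K:ℝ)+1) * (1 + m - sstar y) + Δ)) := by
      rw [← sub_pos, ← Finset.sum_sub_distrib]
      have e : ∀ y ∈ Finset.univ (α := Fin C),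
          η y * ((1 / (K:ℝ)) * (((K:ℝ)+1) * (1 + m - sstar y) + Δ))
            - η y * ((1 / (K:ℝ)) * (((K:ℝ)+1) * (1 + m - s y)))
          = η y * ((1 / (K:ℝ)) * (((K:ℝ)+1) * (s y - sstar y) + Δ)) := by
        intro y _; ring
      rw [Finset.sum_congr rfl e]
      classical
      set f : Fin C → ℝ := fun y => η y * ((1 / (K:ℝ)) * (((K:ℝ)+1) * (s y - sstar y) + Δ)) with hf
      have split := Finset.sum_filter_add_sum_filter_not Finset.univ
        (fun y : Fin C => K + 1 ≤ (y:ℕ)) f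
      set T := ∑ y ∈ Finset.univ.filter (fun y : Fin C => K + 1 ≤ (y : ℕ)), η y with hT
      set H := ∑ y ∈ Finset.univ.filter (fun y : Fin C => ¬ (K + 1 ≤ (y : ℕ))), η y with hH
      have hHT : T + H = 1 := by
        rw [hT, hH, Finset.sum_filter_add_sum_filter_not]; exact hsum
      have htail_sum : ∑ y ∈ Finset.univ.filter (fun y : Fin C => K + 1 ≤ (y:ℕ)), f y
          = T * ((1 / (K:ℝ)) * Δ) := by
        rw [hT, Finset.sum_mul]
        apply Finset.sum_congr rfl
        intro y hy
        rw [Finset.mem_filter] at hy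
        have : s y = sstar y := by rw [hs]; rw [if_neg (by omega)]
        rw [hf]; simp only []; rw [this]; ring
      have hhead_sum : H * ((1 / (K:ℝ)) * (-((K:ℝ) * Δ)))
          ≤ ∑ y ∈ Finset.univ.filter (fun y : Fin C => ¬ (K + 1 ≤ (y:ℕ))), f y := by
        rw [hH, Finset.sum_mul]
        apply Finset.sum_le_sum
        intro y hy
        rw [Finset.mem_filter] at hy
        have hyK : (y:ℕ) ≤ K := by omega
        have hsym : s y = m := by rw [hs]; rw [if_pos hyK]
        rw [hf]; simp only []
        apply mul_le_mul_of_nonneg_left _ (hnn y)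
        apply mul_le_mul_of_nonneg_left _ hKinv
        have h4 : ((K:ℝ)+1) * (sstar y - m) ≤ ((K:ℝ)+1) * Δ :=
          mul_le_mul_of_nonneg_left (hle_Δ y hyK) (by linarith)
        rw [hsym]
        nlinarith [hΔpos]
      have hT' : (K:ℝ) < T * ((K:ℝ)+1) := by
        rw [div_lt_iff₀ (by linarith : (0:ℝ) < (K:ℝ)+1)] at htail
        exact htail
      have hfinal : 0 < T * ((1 / (K:ℝ)) * Δ) + H * ((1 / (K:ℝ)) * (-((K:ℝ) * Δ))) := by
        have hHe : H = 1 - T := by linarith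
        have halg : T * ((1 / (K:ℝ)) * Δ) + (1 - T) * ((1 / (K:ℝ)) * (-((K:ℝ) * Δ)))
            = (1 / (K:ℝ)) * (Δ * (T * ((K:ℝ)+1) - (K:ℝ))) := by
          field_simp
          ring
        rw [hHe, halg]
        have := mul_pos hΔpos (by linarith : (0:ℝ) < T * ((K:ℝ)+1) - (K:ℝ))
        positivity
      calc (0:ℝ) < T * ((1 / (K:ℝ)) * Δ) + H * ((1 / (K:ℝ)) * (-((K:ℝ) * Δ))) := hfinal
        _ ≤ (∑ y ∈ Finset.univ.filter (fun y : Fin C => K + 1 ≤ (y:ℕ)), f y)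
            + ∑ y ∈ Finset.univ.filter (fun y : Fin C => ¬ (K + 1 ≤ (y:ℕ))), f y := by
              rw [htail_sum]; linarith [hhead_sum]
        _ = ∑ y : Fin C, f y := split
    calc surrRisk K hingeLoss η s
        = ∑ y : Fin C, η y * ((1 / (K:ℝ)) * (((K:ℝ)+1) * (1 + m - s y))) := hrs
      _ < ∑ y : Fin C, η y * ((1 / (K:ℝ)) * (((K:ℝ)+1) * (1 + m - sstar y) + Δ)) := key
      _ ≤ surrRisk K hingeLoss η sstar := hlb
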